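/- There exists a constant C₂ > 0 depending only on ρ₊, ρ₋ and g such that for every frequency ξ ≠ 0 there exists a constant C₃ > 0 (depending on ρ₊, ρ₋, μ₊, μ₋ and ξ) with α(s) ≥ −C₂|ξ| + C₃ s for all s > 0. -/

import Mathlib

open MeasureTheory Set Filter Topology

noncomputable section

/-- The set of Rayleigh quotients defining the critical magnetic number `|B|_c`. -/
def BcSet (g ρp ρm : ℝ) : Set ℝ :=
  {r | ∃ φ : ℝ → ℝ, (∃ K, LipschitzWith K φ) ∧ φ (-1) = 0 ∧ φ 1 = 0 ∧
    ¬ (∀ᵐ y ∂(volume.restrict (Icc (-1:ℝ) 1)), φ y = 0) ∧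
    r = g * (ρp - ρm) * (φ 0) ^ 2 / ∫ y in (-1:ℝ)..1, (deriv φ y) ^ 2}

/-- The set of quotients defining the vertical critical frequency `|ξ|_{vc}^B`. -/
def XivcSet (g ρp ρm B : ℝ) : Set ℝ :=
  {r | ∃ φ : ℝ → ℝ, ContDiff ℝ 2 φ ∧ φ (-1) = 0 ∧ φ 1 = 0 ∧
    deriv φ (-1) = 0 ∧ deriv φ 1 = 0 ∧
    0 < g * (ρp - ρm) * (φ 0) ^ 2 - B ^ 2 * ∫ y in (-1:ℝ)..1, (deriv φ y) ^ 2 ∧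
    r = (B ^ 2 * ∫ y in (-1:ℝ)..1, (deriv (deriv φ) y) ^ 2) /
        (g * (ρp - ρm) * (φ 0) ^ 2 - B ^ 2 * ∫ y in (-1:ℝ)..1, (deriv φ y) ^ 2)}

/-- The set of quotients defining the horizontal critical frequency `|ξ|_{hc}^B`. -/
def XihcSet (g ρp ρm B : ℝ) : Set ℝ :=
  {r | ∃ φ : ℝ → ℝ, (∃ K, LipschitzWith K φ) ∧ φ (-1) = 0 ∧ φ 1 = 0 ∧
    ¬ (∀ᵐ y ∂(volume.restrict (Icc (-1:ℝ) 1)), φ y = 0) ∧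
    r = (g * (ρp - ρm) * (φ 0) ^ 2 - B ^ 2 * ∫ y in (-1:ℝ)..1, (deriv φ y) ^ 2) /
        (B ^ 2 * ∫ y in (-1:ℝ)..1, (φ y) ^ 2)}

/-- The magnetic part `E₀` of the energy of the vertical problem. -/
def E0 (g ρp ρm B ξ : ℝ) (ψ : ℝ → ℝ) : ℝ :=
  (1/2) * (∫ y in (-1:ℝ)..1, B ^ 2 * ((deriv ψ y) ^ 2 + (deriv (deriv ψ) y) ^ 2 / ξ ^ 2)) -
    (1/2) * (g * (ρp - ρm)) * (ψ 0) ^ 2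

/-- The viscous part `E₁` of the energy, with piecewise viscosity `μ₊` above, `μ₋` below. -/
def E1 (μp μm ξ : ℝ) (ψ : ℝ → ℝ) : ℝ :=
  (1/2) * ∫ y in (-1:ℝ)..1,
    (if 0 < y then μp else μm) *
      (4 * ξ ^ 2 * (deriv ψ y) ^ 2 + (ξ ^ 2 * ψ y + deriv (deriv ψ) y) ^ 2)

/-- The normalization functional `J`, with piecewise density `ρ₊` above, `ρ₋` below. -/
def Jfun (ρp ρm ξ : ℝ) (ψ : ℝ → ℝ) : ℝ :=
  (1/2) * ∫ y in (-1:ℝ)..1,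
    (if 0 < y then ρp else ρm) * (ξ ^ 2 * (ψ y) ^ 2 + (deriv ψ y) ^ 2)

/-- `ψ` is an admissible test function: `C²` with vanishing boundary values of `ψ` and `ψ'`. -/
def Adm (ψ : ℝ → ℝ) : Prop :=
  ContDiff ℝ 2 ψ ∧ ψ (-1) = 0 ∧ ψ 1 = 0 ∧ deriv ψ (-1) = 0 ∧ deriv ψ 1 = 0

/-- `α(s)`: the infimum of the modified energy `E(ψ;s) = ξ²E₀(ψ) + sE₁(ψ)` over admissible
`ψ` normalized by `J(ψ) = 1`. -/
def alpha (ρp ρm μp μm g B ξ s : ℝ) : ℝ :=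
  sInf {r : ℝ | ∃ ψ : ℝ → ℝ, Adm ψ ∧ Jfun ρp ρm ξ ψ = 1 ∧
    r = ξ ^ 2 * E0 g ρp ρm B ξ ψ + s * E1 μp μm ξ ψ}

lemma pw_intervalIntegrable {f : ℝ → ℝ} (hf : Continuous f) (c1 c2 : ℝ) :
    IntervalIntegrable (fun y => (if 0 < y then c1 else c2) * f y) volume (-1) 1 := by
  have h1 : IntervalIntegrable (fun y => (if 0 < y then c1 else c2) * f y) volume (-1) 0 := by
    apply ((continuous_const.mul hf : Continuous fun y => c2 * f y).intervalIntegrable (-1) 0).congr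
    intro y hy
    show c2 * f y = (if 0 < y then c1 else c2) * f y
    rw [uIoc_of_le (by norm_num : (-1:ℝ) ≤ 0)] at hy
    rw [if_neg (not_lt.mpr hy.2)]
  have h2 : IntervalIntegrable (fun y => (if 0 < y then c1 else c2) * f y) volume 0 1 := by
    apply ((continuous_const.mul hf : Continuous fun y => c1 * f y).intervalIntegrable 0 1).congr
    intro y hy
    show c1 * f y = (if 0 < y then c1 else c2) * f y
    rw [uIoc_of_le (by norm_num : (0:ℝ) ≤ 1)] at hy
    rw [if_pos hy.1]
  exact h1.trans h2

lemma sq_point_bound {ψ : ℝ → ℝ} (hψd : Differentiable ℝ ψ) (hψ'c : Continuous (deriv ψ))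
    (hb : ψ (-1) = 0) {ε : ℝ} (hε : 0 < ε) {t : ℝ} (ht : t ∈ Icc (-1:ℝ) 1) :
    ψ t ^ 2 ≤ ∫ y in (-1:ℝ)..1, (ε * ψ y ^ 2 + ε⁻¹ * (deriv ψ y) ^ 2) := by
  have hc := hψd.continuous
  have hgc : Continuous fun y => ε * ψ y ^ 2 + ε⁻¹ * (deriv ψ y) ^ 2 := by fun_prop
  have hfc : Continuous fun y => 2 * ψ y * deriv ψ y := by fun_prop
  have heq : ψ t ^ 2 = ∫ y in (-1:ℝ)..t, 2 * ψ y * deriv ψ y := by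
    rw [intervalIntegral.integral_eq_sub_of_hasDerivAt
      (f := fun y => ψ y ^ 2) (fun y _ => by simpa using ((hψd y).hasDerivAt).fun_pow 2)
      (hfc.intervalIntegrable _ _)]
    rw [hb]; norm_num
  have h1 : (∫ y in (-1:ℝ)..t, 2 * ψ y * deriv ψ y)
      ≤ ∫ y in (-1:ℝ)..t, (ε * ψ y ^ 2 + ε⁻¹ * (deriv ψ y) ^ 2) := by
    apply intervalIntegral.integral_mono_on ht.1
      (hfc.intervalIntegrable _ _) (hgc.intervalIntegrable _ _)
    intro y _
    have h := div_nonneg (sq_nonneg (ε * ψ y - deriv ψ y)) hε.le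
    have he : (ε * ψ y - deriv ψ y)^2 / ε
        = ε * ψ y ^2 + ε⁻¹ * (deriv ψ y)^2 - 2 * ψ y * deriv ψ y := by
      field_simp; ring
    rw [he] at h; linarith
  have h2 : (∫ y in (-1:ℝ)..t, (ε * ψ y ^ 2 + ε⁻¹ * (deriv ψ y) ^ 2))
      ≤ ∫ y in (-1:ℝ)..1, (ε * ψ y ^ 2 + ε⁻¹ * (deriv ψ y) ^ 2) := by
    rw [← intervalIntegral.integral_add_adjacent_intervals
      (hgc.intervalIntegrable (-1) t) (hgc.intervalIntegrable t 1)]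
    have : 0 ≤ ∫ y in t..1, (ε * ψ y ^ 2 + ε⁻¹ * (deriv ψ y) ^ 2) :=
      intervalIntegral.integral_nonneg ht.2 (fun y _ => by positivity)
    linarith
  linarith [heq ▸ h1]

def psi0 : ℝ → ℝ := fun y => (1 - y^2)^2

lemma psi0_hasDeriv (y : ℝ) : HasDerivAt psi0 (-4*y*(1-y^2)) y := by
  have h := ((hasDerivAt_pow 2 y).const_sub 1).fun_pow 2
  refine h.congr_deriv ?_
  push_cast; ring

lemma psi0_deriv : deriv psi0 = fun y => -4*y*(1-y^2) :=
  funext fun y => (psi0_hasDeriv y).deriv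

lemma psi0_diff : Differentiable ℝ psi0 := fun y => (psi0_hasDeriv y).differentiableAt

lemma psi0_contDiff : ContDiff ℝ 2 psi0 := by
  have : ContDiff ℝ 2 (fun y : ℝ => (1 - y^2)^2) := by fun_prop
  exact this

lemma exists_adm (ρp ρm ξ : ℝ) (hρm : 0 < ρm) (hρ : ρm < ρp) (hξ : ξ ≠ 0) :
    ∃ ψ : ℝ → ℝ, Adm ψ ∧ Jfun ρp ρm ξ ψ = 1 := by
  have hξ2 : 0 < ξ^2 := by positivity
  have hcont : Continuous fun y => ξ^2 * (psi0 y)^2 + (deriv psi0 y)^2 := by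
    rw [psi0_deriv]; unfold psi0; fun_prop
  have hJ0 : 0 < Jfun ρp ρm ξ psi0 := by
    unfold Jfun
    apply mul_pos (by norm_num)
    apply intervalIntegral.intervalIntegral_pos_of_pos_on
      (pw_intervalIntegrable hcont ρp ρm)
    · intro y hy
      have hy2 : y^2 < 1 := by nlinarith [hy.1, hy.2]
      have hp : 0 < psi0 y := pow_pos (by linarith : (0:ℝ) < 1 - y^2) 2
      apply mul_pos
      · split_ifs <;> linarith
      · exact add_pos_of_pos_of_nonneg (by positivity) (sq_nonneg _)
    · norm_num
  set J₀ := Jfun ρp ρm ξ psi0 with hJ₀def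
  set c : ℝ := (Real.sqrt J₀)⁻¹ with hcdef
  have hc2 : c^2 = J₀⁻¹ := by
    rw [hcdef, inv_pow, Real.sq_sqrt hJ0.le]
  have hdc : deriv (fun y => c * psi0 y) = fun y => c * deriv psi0 y :=
    funext fun y => deriv_const_mul c (psi0_diff y)
  refine ⟨fun y => c * psi0 y, ⟨contDiff_const.mul psi0_contDiff, ?_, ?_, ?_, ?_⟩, ?_⟩
  · show c * psi0 (-1) = 0; unfold psi0; norm_num
  · show c * psi0 1 = 0; unfold psi0; norm_num
  · rw [hdc]; show c * deriv psi0 (-1) = 0; rw [psi0_deriv]; norm_num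
  · rw [hdc]; show c * deriv psi0 1 = 0; rw [psi0_deriv]; norm_num
  · have hscale : Jfun ρp ρm ξ (fun y => c * psi0 y) = c^2 * J₀ := by
      rw [hJ₀def]; unfold Jfun
      rw [show (fun y => (if 0 < y then ρp else ρm) *
            (ξ^2 * ((fun y => c * psi0 y) y)^2 + (deriv (fun y => c * psi0 y) y)^2))
          = fun y => c^2 * ((if 0 < y then ρp else ρm) *
            (ξ^2 * (psi0 y)^2 + (deriv psi0 y)^2)) from
        funext fun y => by rw [hdc]; ring]
      rw [intervalIntegral.integral_const_mul]; ring
    rw [hscale, hc2, inv_mul_cancel₀ hJ0.ne']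

lemma energy_bound {ρp ρm μp μm g B ξ s : ℝ}
    (hρm : 0 < ρm) (hρ : ρm < ρp) (hg : 0 < g) (hμp : 0 < μp) (hμm : 0 < μm)
    (hξ : ξ ≠ 0) (hs : 0 < s) {ψ : ℝ → ℝ} (hAdm : Adm ψ) (hJ : Jfun ρp ρm ξ ψ = 1) :
    -(g * (ρp - ρm) / ρm) * |ξ| + (4 * (min μp μm) * ξ^2 / (ρp * (16 * ξ^2 + 1))) * s
      ≤ ξ ^ 2 * E0 g ρp ρm B ξ ψ + s * E1 μp μm ξ ψ := by
  obtain ⟨hC, hb1, hb2, -, -⟩ := hAdm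
  have hξ2 : (0:ℝ) < ξ^2 := by positivity
  have hξa : (0:ℝ) < |ξ| := abs_pos.mpr hξ
  have hGρ : (0:ℝ) < g * (ρp - ρm) := by nlinarith
  have hμ0 : (0:ℝ) < min μp μm := lt_min hμp hμm
  -- regularity
  have h2 : ContDiff ℝ (1+1) ψ := by norm_num; exact hC
  rw [contDiff_succ_iff_deriv] at h2
  have hψd : Differentiable ℝ ψ := h2.1
  have h1 := contDiff_one_iff_deriv.mp h2.2.2
  have hψ'c : Continuous (deriv ψ) := h1.1.continuous
  have hψ''c : Continuous (deriv (deriv ψ)) := h1.2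
  have hc : Continuous ψ := hψd.continuous
  set A := ∫ y in (-1:ℝ)..1, (deriv ψ y)^2 with hAdef
  set B2 := ∫ y in (-1:ℝ)..1, (ψ y)^2 with hB2def
  have hA0 : 0 ≤ A := intervalIntegral.integral_nonneg (by norm_num) (fun y _ => sq_nonneg _)
  have hB20 : 0 ≤ B2 := intervalIntegral.integral_nonneg (by norm_num) (fun y _ => sq_nonneg _)
  have hlin : ∀ ε : ℝ, (∫ y in (-1:ℝ)..1, (ε * ψ y ^ 2 + ε⁻¹ * (deriv ψ y) ^ 2))
      = ε * B2 + ε⁻¹ * A := by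
    intro ε
    rw [intervalIntegral.integral_add (f := fun y => ε * ψ y ^ 2) (g := fun y => ε⁻¹ * deriv ψ y ^ 2)
      ((continuous_const.mul (hc.pow 2)).intervalIntegrable _ _)
      ((continuous_const.mul (hψ'c.pow 2)).intervalIntegrable _ _),
      intervalIntegral.integral_const_mul, intervalIntegral.integral_const_mul]
  have hh : Continuous fun y => ξ^2 * ψ y ^2 + (deriv ψ y)^2 := by fun_prop
  have hInth : (∫ y in (-1:ℝ)..1, (ξ^2 * ψ y ^2 + (deriv ψ y)^2)) = ξ^2 * B2 + A := by
    rw [intervalIntegral.integral_add (f := fun y => ξ^2 * ψ y ^ 2) (g := fun y => deriv ψ y ^ 2)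
      ((continuous_const.mul (hc.pow 2)).intervalIntegrable _ _)
      ((hψ'c.pow 2).intervalIntegrable _ _),
      intervalIntegral.integral_const_mul]
  -- J = 1 gives the two bounds
  have hJ2 : (∫ y in (-1:ℝ)..1, (if 0 < y then ρp else ρm) * (ξ^2 * ψ y ^2 + (deriv ψ y)^2))
      = 2 := by
    unfold Jfun at hJ; linarith
  have hIl : ρm * (ξ^2 * B2 + A) ≤ 2 := by
    have hm : (∫ y in (-1:ℝ)..1, ρm * (ξ^2 * ψ y ^2 + (deriv ψ y)^2))
        ≤ ∫ y in (-1:ℝ)..1, (if 0 < y then ρp else ρm) * (ξ^2 * ψ y ^2 + (deriv ψ y)^2) := by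
      apply intervalIntegral.integral_mono_on (by norm_num)
        ((continuous_const.mul hh).intervalIntegrable _ _) (pw_intervalIntegrable hh ρp ρm)
      intro y _
      apply mul_le_mul_of_nonneg_right _ (by positivity)
      split_ifs <;> linarith
    rw [intervalIntegral.integral_const_mul, hInth] at hm
    linarith
  have hIu : 2 ≤ ρp * (ξ^2 * B2 + A) := by
    have hm : (∫ y in (-1:ℝ)..1, (if 0 < y then ρp else ρm) * (ξ^2 * ψ y ^2 + (deriv ψ y)^2))
        ≤ ∫ y in (-1:ℝ)..1, ρp * (ξ^2 * ψ y ^2 + (deriv ψ y)^2) := by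
      apply intervalIntegral.integral_mono_on (by norm_num)
        (pw_intervalIntegrable hh ρp ρm) ((continuous_const.mul hh).intervalIntegrable _ _)
      intro y _
      apply mul_le_mul_of_nonneg_right _ (by positivity)
      split_ifs <;> linarith
    rw [intervalIntegral.integral_const_mul, hInth] at hm
    linarith
  -- Poincaré: B2 ≤ 16 A
  have hB16 : B2 ≤ 16 * A := by
    have hp : ∀ t ∈ Icc (-1:ℝ) 1, ψ t ^2 ≤ (4:ℝ)⁻¹ * B2 + 4 * A := by
      intro t ht
      have := sq_point_bound hψd hψ'c hb1 (by norm_num : (0:ℝ) < (4:ℝ)⁻¹) ht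
      rw [hlin] at this; norm_num at this; linarith
    have : B2 ≤ ∫ _ in (-1:ℝ)..1, ((4:ℝ)⁻¹ * B2 + 4 * A) := by
      rw [hB2def]
      apply intervalIntegral.integral_mono_on (by norm_num)
        ((hc.pow 2).intervalIntegrable _ _) (intervalIntegrable_const)
      exact hp
    rw [intervalIntegral.integral_const] at this
    norm_num at this
    linarith
  -- ψ(0)² bound
  have hψ0 : ψ 0 ^2 ≤ |ξ|⁻¹ * (2 / ρm) := by
    have h1' := sq_point_bound hψd hψ'c hb1 hξa (by norm_num : (0:ℝ) ∈ Icc (-1:ℝ) 1)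
    rw [hlin] at h1'
    have key : |ξ|⁻¹ * ξ^2 = |ξ| := by
      rw [← sq_abs ξ, sq, inv_mul_cancel_left₀ hξa.ne']
    have he : |ξ|⁻¹ * (ξ^2 * B2 + A) = |ξ| * B2 + |ξ|⁻¹ * A := by
      rw [mul_add, ← mul_assoc, key]
    rw [← he] at h1'
    have hK : ξ^2 * B2 + A ≤ 2 / ρm := by
      rw [le_div_iff₀ hρm]; linarith [mul_comm (ξ^2 * B2 + A) ρm]
    calc ψ 0 ^2 ≤ |ξ|⁻¹ * (ξ^2 * B2 + A) := h1'
      _ ≤ |ξ|⁻¹ * (2 / ρm) := by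
          apply mul_le_mul_of_nonneg_left hK (by positivity)
  -- E0 lower bound
  have hE0 : -(1/2) * (g * (ρp - ρm)) * ψ 0 ^2 ≤ E0 g ρp ρm B ξ ψ := by
    unfold E0
    have : (0:ℝ) ≤ ∫ y in (-1:ℝ)..1, B^2 * ((deriv ψ y)^2 + (deriv (deriv ψ) y)^2 / ξ^2) :=
      intervalIntegral.integral_nonneg (by norm_num) (fun y _ => by positivity)
    linarith
  have hE0' : -(g * (ρp - ρm) / ρm) * |ξ| ≤ ξ^2 * E0 g ρp ρm B ξ ψ := by
    have t1 : ξ^2 * (-(1/2) * (g * (ρp - ρm)) * ψ 0 ^2) ≤ ξ^2 * E0 g ρp ρm B ξ ψ :=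
      mul_le_mul_of_nonneg_left hE0 (sq_nonneg ξ)
    have t2 : ξ^2 * ψ 0 ^2 ≤ ξ^2 * (|ξ|⁻¹ * (2/ρm)) :=
      mul_le_mul_of_nonneg_left hψ0 (sq_nonneg ξ)
    have key : |ξ|⁻¹ * ξ^2 = |ξ| := by
      rw [← sq_abs ξ, sq, inv_mul_cancel_left₀ hξa.ne']
    have t3 : ξ^2 * (|ξ|⁻¹ * (2/ρm)) = 2 / ρm * |ξ| := by
      rw [show ξ^2 * (|ξ|⁻¹ * (2/ρm)) = (|ξ|⁻¹ * ξ^2) * (2/ρm) from by ring, key]; ring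
    have t4 : -(g * (ρp - ρm) / ρm) * |ξ| = -(1/2) * (g * (ρp - ρm)) * (2 / ρm * |ξ|) := by
      field_simp
    rw [t3] at t2
    have t5 := mul_le_mul_of_nonneg_left t2
      (le_of_lt (by positivity : (0:ℝ) < (1/2) * (g * (ρp - ρm))))
    have t6 : ξ^2 * (-(1/2) * (g * (ρp - ρm)) * ψ 0 ^ 2)
        = -((1/2) * (g * (ρp - ρm)) * (ξ^2 * ψ 0 ^2)) := by ring
    have t7 : -(g * (ρp - ρm) / ρm) * |ξ|
        = -((1/2) * (g * (ρp - ρm)) * (2 / ρm * |ξ|)) := by field_simp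
    rw [t6] at t1
    rw [t7]
    linarith [t1, t5]
  -- E1 lower bound
  have hF : Continuous fun y => 4 * ξ^2 * (deriv ψ y)^2 + (ξ^2 * ψ y + deriv (deriv ψ) y)^2 := by
    fun_prop
  have hE1 : 2 * (min μp μm) * ξ^2 * A ≤ E1 μp μm ξ ψ := by
    unfold E1
    have hm : (∫ y in (-1:ℝ)..1, (min μp μm * (4 * ξ^2)) * (deriv ψ y)^2)
        ≤ ∫ y in (-1:ℝ)..1, (if 0 < y then μp else μm) *
            (4 * ξ^2 * (deriv ψ y)^2 + (ξ^2 * ψ y + deriv (deriv ψ) y)^2) := by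
      apply intervalIntegral.integral_mono_on (by norm_num)
        ((continuous_const.mul (hψ'c.pow 2)).intervalIntegrable _ _)
        (pw_intervalIntegrable hF μp μm)
      intro y _
      have hif : min μp μm ≤ (if 0 < y then μp else μm) := by
        split_ifs; exacts [min_le_left _ _, min_le_right _ _]
      have hif0 : (0:ℝ) ≤ (if 0 < y then μp else μm) := by split_ifs <;> linarith
      calc min μp μm * (4 * ξ^2) * (deriv ψ y)^2
          = min μp μm * (4 * ξ^2 * (deriv ψ y)^2) := by ring
        _ ≤ (if 0 < y then μp else μm) * (4 * ξ^2 * (deriv ψ y)^2) :=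
            mul_le_mul_of_nonneg_right hif (by positivity)
        _ ≤ (if 0 < y then μp else μm) *
              (4 * ξ^2 * (deriv ψ y)^2 + (ξ^2 * ψ y + deriv (deriv ψ) y)^2) :=
            mul_le_mul_of_nonneg_left (le_add_of_nonneg_right (sq_nonneg _)) hif0
    rw [intervalIntegral.integral_const_mul] at hm
    have : 2 * (min μp μm) * ξ^2 * A = (1/2) * (min μp μm * (4 * ξ^2) * A) := by ring
    linarith [hm]
  -- A lower bound
  have hA2 : 2 ≤ ρp * (16 * ξ^2 + 1) * A := by
    have h16 : ξ^2 * B2 ≤ 16 * ξ^2 * A := by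
      have := mul_le_mul_of_nonneg_left hB16 (sq_nonneg ξ)
      linarith [this, mul_comm (ξ^2) (16 * A)]
    have hmono : ρp * (ξ^2 * B2 + A) ≤ ρp * (16 * ξ^2 + 1) * A := by
      have h1 := mul_le_mul_of_nonneg_left (by linarith : ξ^2 * B2 + A ≤ 16 * ξ^2 * A + A)
        (le_of_lt (lt_trans hρm hρ))
      have h2 : ρp * (16 * ξ^2 * A + A) = ρp * (16 * ξ^2 + 1) * A := by ring
      linarith
    linarith
  have hC3A : 4 * (min μp μm) * ξ^2 / (ρp * (16 * ξ^2 + 1)) ≤ 2 * (min μp μm) * ξ^2 * A := by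
    have hD : (0:ℝ) < ρp * (16 * ξ^2 + 1) := mul_pos (lt_trans hρm hρ) (by positivity)
    rw [div_le_iff₀ hD]
    have hc0 : (0:ℝ) ≤ 2 * (min μp μm) * ξ^2 :=
      mul_nonneg (mul_nonneg (by norm_num) hμ0.le) (sq_nonneg ξ)
    have h1 := mul_le_mul_of_nonneg_left hA2 hc0
    have h2 : 2 * (min μp μm) * ξ^2 * (ρp * (16 * ξ^2 + 1) * A)
        = 2 * (min μp μm) * ξ^2 * A * (ρp * (16 * ξ^2 + 1)) := by ring
    linarith
  -- combine
  have hE1' : (4 * (min μp μm) * ξ^2 / (ρp * (16 * ξ^2 + 1))) * s ≤ s * E1 μp μm ξ ψ := by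
    have h1 := mul_le_mul_of_nonneg_right (hC3A.trans hE1) hs.le
    linarith [h1, mul_comm s (E1 μp μm ξ ψ)]
  linarith [hE0', hE1']

/-- there is `C₂ > 0` depending only on the densities and `g` such that for every
`ξ ≠ 0` there is `C₃ > 0` (independent of `B`) with `α(s) ≥ -C₂|ξ| + C₃ s` for all `s > 0`. -/
theorem alpha_lower_bound
    (ρp ρm g : ℝ)
    (hρm : 0 < ρm) (hρ : ρm < ρp) (hg : 0 < g) :
    ∃ C₂ : ℝ, 0 < C₂ ∧
      ∀ μp μm : ℝ, 0 < μp → 0 < μm → ∀ ξ : ℝ, ξ ≠ 0 →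
        ∃ C₃ : ℝ, 0 < C₃ ∧
          ∀ B : ℝ, B ≠ 0 → ∀ s : ℝ, 0 < s →
            -C₂ * |ξ| + C₃ * s ≤ alpha ρp ρm μp μm g B ξ s := by
  refine ⟨g * (ρp - ρm) / ρm, div_pos (mul_pos hg (sub_pos.mpr hρ)) hρm, ?_⟩
  intro μp μm hμp hμm ξ hξ
  have hξ2 : (0:ℝ) < ξ^2 := by positivity
  have hρp : (0:ℝ) < ρp := lt_trans hρm hρ
  refine ⟨4 * (min μp μm) * ξ^2 / (ρp * (16 * ξ^2 + 1)), ?_, ?_⟩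
  · exact div_pos (mul_pos (mul_pos (by norm_num) (lt_min hμp hμm)) hξ2)
      (mul_pos hρp (by positivity))
  · intro B hB s hs
    unfold alpha
    apply le_csInf
    · obtain ⟨ψ, hA, hJ⟩ := exists_adm ρp ρm ξ hρm hρ hξ
      exact ⟨_, ψ, hA, hJ, rfl⟩
    · rintro r ⟨ψ, hA, hJ, rfl⟩
      exact energy_bound hρm hρ hg hμp hμm hξ hs hA hJ

end
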